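/- Let M be a smooth manifold with H¹(M,ℝ)=0, let ω be an exact 2-form on M (not necessarily nondegenerate), and let Diff(M,ω) be the group of diffeomorphisms of M preserving ω. Fix ω₁ with dω₁=ω and x₀∈M. Then C_{x₀}(g₁,g₂)=∫_{x₀}^{g₂x₀}(g₁*ω₁−ω₁) is a normalized 2-cocycle on Diff(M,ω) with values in the trivial module ℝ, and its cohomology class is independent of the choice of x₀ and of ω₁. -/
import Mathlib


open scoped BigOperators

namespace SymplCocycle

variable {M V : Type*} [AddCommGroup V] [Module ℝ V]

abbrev Form (M V : Type*) [AddCommGroup V] [Module ℝ V] (k : ℕ) :=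
  M → V [⋀^Fin k]→ₗ[ℝ] ℝ

noncomputable def ofFun (f : M → ℝ) : Form M V 0 :=
  fun x => AlternatingMap.constOfIsEmpty ℝ V (Fin 0) (f x)

noncomputable def wedgeAlt {p q : ℕ} (α : V [⋀^Fin p]→ₗ[ℝ] ℝ) (β : V [⋀^Fin q]→ₗ[ℝ] ℝ) :
    V [⋀^Fin (p + q)]→ₗ[ℝ] ℝ :=
  AlternatingMap.domDomCongr finSumFinEquiv
    ((LinearMap.mul' ℝ ℝ).compAlternatingMap (α.domCoprod β))

noncomputable def wedge {p q : ℕ} (α : Form M V p) (β : Form M V q) : Form M V (p + q) :=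
  fun x => wedgeAlt (α x) (β x)

noncomputable def wpow (ω : Form M V 2) : (n : ℕ) → Form M V (2 * n)
  | 0 => ofFun fun _ => (1 : ℝ)
  | n + 1 => wedge (wpow ω n) ω

def castF {k l : ℕ} (h : k = l) (α : Form M V k) : Form M V l := h ▸ α

noncomputable def iprod (ω : Form M V 2) (X : M → V) : Form M V 1 :=
  fun x => (ω x).curryLeft (X x)

/-- An abstract "differential calculus" on `M`, with all tangent spaces identified with `V`:
it records which functions/maps/forms/vector fields are smooth, the tangent maps of smooth
self-maps, the exterior derivative, and the Lie bracket of vector fields, together with their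
standard properties.  The axiom `apply_eq_of_d_ofFun_eq_zero` encodes connectedness of `M`. -/
structure DiffCalc (M V : Type*) [AddCommGroup V] [Module ℝ V] where
  SmoothFun : (M → ℝ) → Prop
  SmoothMap : (M → M) → Prop
  SmoothForm : ∀ {k : ℕ}, Form M V k → Prop
  SmoothVF : (M → V) → Prop
  Tmap : (M → M) → M → V →ₗ[ℝ] V
  d : ∀ {k : ℕ}, Form M V k → Form M V (k + 1)
  lieVF : (M → V) → (M → V) → (M → V)
  smoothMap_id : SmoothMap id
  smoothMap_comp : ∀ {f g : M → M}, SmoothMap f → SmoothMap g → SmoothMap (f ∘ g)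
  smoothFun_comp : ∀ {f : M → ℝ} {g : M → M}, SmoothFun f → SmoothMap g → SmoothFun (f ∘ g)
  smoothFun_const : ∀ c : ℝ, SmoothFun fun _ => c
  smoothForm_ofFun : ∀ {f : M → ℝ}, SmoothFun f → SmoothForm (ofFun f)
  smoothFun_of_ofFun : ∀ {f : M → ℝ}, SmoothForm (ofFun f) → SmoothFun f
  smoothForm_add : ∀ {k} {α β : Form M V k}, SmoothForm α → SmoothForm β → SmoothForm (α + β)
  smoothForm_neg : ∀ {k} {α : Form M V k}, SmoothForm α → SmoothForm (-α)
  smoothForm_wedge : ∀ {p q} {α : Form M V p} {β : Form M V q},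
    SmoothForm α → SmoothForm β → SmoothForm (wedge α β)
  smoothForm_d : ∀ {k} {α : Form M V k}, SmoothForm α → SmoothForm (d α)
  smoothForm_pull : ∀ {k} {α : Form M V k} {g : M → M}, SmoothMap g → SmoothForm α →
    SmoothForm fun x => (α (g x)).compLinearMap (Tmap g x)
  smoothVF_lie : ∀ {X Y : M → V}, SmoothVF X → SmoothVF Y → SmoothVF (lieVF X Y)
  lieVF_antisymm : ∀ X Y : M → V, lieVF X Y = -lieVF Y X
  Tmap_id : ∀ x : M, Tmap id x = LinearMap.id
  Tmap_comp : ∀ {f g : M → M} (x : M), SmoothMap f → SmoothMap g →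
    Tmap (f ∘ g) x = (Tmap f (g x)).comp (Tmap g x)
  d_add : ∀ {k} (α β : Form M V k), d (α + β) = d α + d β
  d_d : ∀ {k} (α : Form M V k), SmoothForm α → d (d α) = 0
  d_pull : ∀ {k} {g : M → M} (α : Form M V k), SmoothMap g → SmoothForm α →
    d (fun x => (α (g x)).compLinearMap (Tmap g x)) =
      fun x => (d α (g x)).compLinearMap (Tmap g x)
  apply_eq_of_d_ofFun_eq_zero : ∀ {f : M → ℝ}, SmoothFun f → d (ofFun f) = 0 →
    ∀ x y : M, f x = f y

/-- Pullback of a `k`-form along a (smooth) map. -/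
def DiffCalc.pull (F : DiffCalc M V) {k : ℕ} (g : M → M) (α : Form M V k) : Form M V k :=
  fun x => (α (g x)).compLinearMap (F.Tmap g x)

/-- The symplectomorphisms (diffeomorphisms preserving the `2`-form `ω`) of `M`. -/
def DiffCalc.IsSymplecto (F : DiffCalc M V) (ω : Form M V 2) (g : Equiv.Perm M) : Prop :=
  F.SmoothMap g ∧ F.SmoothMap g.symm ∧ F.pull g ω = ω

/-- Pointwise nondegeneracy of a `2`-form. -/
def Nondegenerate (ω : Form M V 2) : Prop :=
  ∀ x : M, ∀ u : V, u ≠ 0 → ∃ v : V, ω x ![u, v] ≠ 0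

/-- A `2`-form is symplectic if it is smooth, closed and nondegenerate. -/
def DiffCalc.IsSymplectic (F : DiffCalc M V) (ω : Form M V 2) : Prop :=
  F.SmoothForm ω ∧ F.d ω = 0 ∧ Nondegenerate ω

/-- `X` is a locally Hamiltonian vector field: `i_X ω` is closed. -/
def DiffCalc.IsLocHam (F : DiffCalc M V) (ω : Form M V 2) (X : M → V) : Prop :=
  F.SmoothVF X ∧ F.SmoothForm (iprod ω X) ∧ F.d (iprod ω X) = 0

/-- `X` is a Hamiltonian vector field: `i_X ω` is exact. -/
def DiffCalc.IsHam (F : DiffCalc M V) (ω : Form M V 2) (X : M → V) : Prop :=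
  F.SmoothVF X ∧ F.SmoothForm (iprod ω X) ∧
    ∃ f : M → ℝ, F.SmoothFun f ∧ F.d (ofFun f) = iprod ω X

/-- `H¹(M,ℝ) = 0`: every closed smooth `1`-form is the differential of a smooth function. -/
def DiffCalc.H1Trivial (F : DiffCalc M V) : Prop :=
  ∀ α : Form M V 1, F.SmoothForm α → F.d α = 0 →
    ∃ f : M → ℝ, F.SmoothFun f ∧ F.d (ofFun f) = α

section Helpers

variable (F : DiffCalc M V)

theorem ofFun_add' (f g : M → ℝ) :
    (ofFun (V := V) fun x => f x + g x) = ofFun f + ofFun g := by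
  funext x; ext v; simp [ofFun]

theorem ofFun_sub' (f g : M → ℝ) :
    (ofFun (V := V) fun x => f x - g x) = ofFun f - ofFun g := by
  funext x; ext v; simp [ofFun]

theorem ofFun_zero' : (ofFun (V := V) fun _ : M => (0 : ℝ)) = 0 := by
  funext x; ext v; simp [ofFun]

theorem d_zero' {k : ℕ} : F.d (0 : Form M V k) = 0 := by
  have h := F.d_add (0 : Form M V k) 0
  rw [add_zero] at h
  exact (left_eq_add.mp h)

theorem d_neg' {k : ℕ} (α : Form M V k) : F.d (-α) = -F.d α := by
  have h := F.d_add α (-α)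
  rw [add_neg_cancel, d_zero'] at h
  exact (neg_eq_of_add_eq_zero_right h.symm).symm

theorem d_sub' {k : ℕ} (α β : Form M V k) : F.d (α - β) = F.d α - F.d β := by
  rw [sub_eq_add_neg, F.d_add, d_neg', sub_eq_add_neg]

theorem smoothFun_add' {f g : M → ℝ} (hf : F.SmoothFun f) (hg : F.SmoothFun g) :
    F.SmoothFun fun x => f x + g x :=
  F.smoothFun_of_ofFun (by
    rw [ofFun_add']
    exact F.smoothForm_add (F.smoothForm_ofFun hf) (F.smoothForm_ofFun hg))

theorem smoothFun_sub' {f g : M → ℝ} (hf : F.SmoothFun f) (hg : F.SmoothFun g) :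
    F.SmoothFun fun x => f x - g x :=
  F.smoothFun_of_ofFun (by
    rw [ofFun_sub', sub_eq_add_neg]
    exact F.smoothForm_add (F.smoothForm_ofFun hf)
      (F.smoothForm_neg (F.smoothForm_ofFun hg)))

/-- Two smooth primitives of the same form differ by a constant (connectedness). -/
theorem constancy {f f' : M → ℝ} (hf : F.SmoothFun f) (hf' : F.SmoothFun f')
    (h : F.d (ofFun (V := V) f) = F.d (ofFun f')) (x y : M) :
    f x - f' x = f y - f' y := by
  have hs : F.SmoothFun fun x => f x - f' x := smoothFun_sub' F hf hf'
  have hd : F.d (ofFun (V := V) fun x => f x - f' x) = 0 := by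
    rw [ofFun_sub', d_sub', h, sub_self]
  exact F.apply_eq_of_d_ofFun_eq_zero hs hd x y

theorem pull_ofFun (g : M → M) (f : M → ℝ) :
    F.pull g (ofFun f) = ofFun fun x => f (g x) := by
  funext x; ext v; simp [DiffCalc.pull, ofFun]

theorem pull_sub {k : ℕ} (g : M → M) (α β : Form M V k) :
    F.pull g (α - β) = F.pull g α - F.pull g β := by
  funext x; ext v; simp [DiffCalc.pull]

theorem pull_id {k : ℕ} (α : Form M V k) : F.pull id α = α := by
  funext x; ext v; simp [DiffCalc.pull, F.Tmap_id]

theorem pull_comp {k : ℕ} {f g : M → M} (hf : F.SmoothMap f) (hg : F.SmoothMap g)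
    (α : Form M V k) : F.pull (f ∘ g) α = F.pull g (F.pull f α) := by
  funext x; ext v; simp [DiffCalc.pull, F.Tmap_comp x hf hg]

theorem d_pull_ofFun {g : M → M} (hg : F.SmoothMap g) {f : M → ℝ} (hf : F.SmoothFun f) :
    F.d (ofFun (V := V) fun x => f (g x)) = F.pull g (F.d (ofFun f)) := by
  rw [← pull_ofFun]
  exact F.d_pull (ofFun f) hg (F.smoothForm_ofFun hf)

theorem symplecto_one (ω : Form M V 2) : F.IsSymplecto ω 1 := by
  refine ⟨?_, ?_, ?_⟩
  · rw [Equiv.Perm.coe_one]; exact F.smoothMap_id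
  · show F.SmoothMap ⇑(1 : Equiv.Perm M).symm
    have : ⇑(1 : Equiv.Perm M).symm = id := by funext x; rfl
    rw [this]; exact F.smoothMap_id
  · rw [Equiv.Perm.coe_one, pull_id]

theorem symplecto_mul (ω : Form M V 2) {g₁ g₂ : Equiv.Perm M}
    (h₁ : F.IsSymplecto ω g₁) (h₂ : F.IsSymplecto ω g₂) : F.IsSymplecto ω (g₁ * g₂) := by
  obtain ⟨h₁s, h₁i, h₁p⟩ := h₁
  obtain ⟨h₂s, h₂i, h₂p⟩ := h₂
  refine ⟨?_, ?_, ?_⟩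
  · rw [Equiv.Perm.coe_mul]; exact F.smoothMap_comp h₁s h₂s
  · have : ⇑(g₁ * g₂).symm = ⇑g₂.symm ∘ ⇑g₁.symm := by funext x; rfl
    rw [this]; exact F.smoothMap_comp h₂i h₁i
  · rw [Equiv.Perm.coe_mul, pull_comp F h₁s h₂s, h₁p, h₂p]

/-- From primitives for `g₁` and `g₂`, build a primitive for `g₁ * g₂`. -/
theorem prim_mul (ω₁ : Form M V 1) {g₁ g₂ : Equiv.Perm M}
    (h₁s : F.SmoothMap g₁) (h₂s : F.SmoothMap g₂)
    {f₁ f₂ : M → ℝ} (hf₁ : F.SmoothFun f₁) (hf₂ : F.SmoothFun f₂)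
    (hd₁ : F.d (ofFun f₁) = F.pull g₁ ω₁ - ω₁)
    (hd₂ : F.d (ofFun f₂) = F.pull g₂ ω₁ - ω₁) :
    F.SmoothFun (fun x => f₁ (g₂ x) + f₂ x) ∧
      F.d (ofFun fun x => f₁ (g₂ x) + f₂ x) = F.pull (g₁ * g₂) ω₁ - ω₁ := by
  constructor
  · exact smoothFun_add' F (F.smoothFun_comp hf₁ h₂s) hf₂
  · rw [ofFun_add', F.d_add, d_pull_ofFun F h₂s hf₁, hd₁, hd₂,
      pull_sub, Equiv.Perm.coe_mul, pull_comp F h₁s h₂s]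
    abel

end Helpers

/-- Let `M` be a (connected) smooth manifold with `H¹(M,ℝ) = 0`, let `ω` be
an exact `2`-form on `M` (not necessarily nondegenerate), and let `Diff(M,ω)` be the group of
diffeomorphisms of `M` preserving `ω`.  Fix a primitive `ω₁` (`dω₁ = ω`) and `x₀ ∈ M`.  Then
`C_{x₀}(g₁,g₂) = ∫_{x₀}^{g₂x₀}(g₁*ω₁ − ω₁)` is a normalized `2`-cocycle on `Diff(M,ω)` with
values in the trivial module `ℝ`, and its cohomology class is independent of the choice of
`x₀` and of `ω₁` (the differences are coboundaries of `1`-cochains).  Line integrals of the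
exact forms `g₁*ω₁ − ω₁` are expressed via primitives (path independence). -/
theorem cocycle_of_lineIntegral_general_two_form
    {M V : Type*} [AddCommGroup V] [Module ℝ V]
    (F : DiffCalc M V)
    (ω : Form M V 2) (hω : F.SmoothForm ω)
    (ω₁ : Form M V 1) (hω₁ : F.SmoothForm ω₁) (hdω₁ : F.d ω₁ = ω)
    (hH1 : F.H1Trivial)
    (x₀ : M)
    (C : Equiv.Perm M → Equiv.Perm M → ℝ)
    (hC : ∀ g₁ ∈ {g | F.IsSymplecto ω g}, ∀ g₂ ∈ {g | F.IsSymplecto ω g},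
      ∃ f : M → ℝ, F.SmoothFun f ∧ F.d (ofFun f) = F.pull g₁ ω₁ - ω₁ ∧
        C g₁ g₂ = f (g₂ x₀) - f x₀) :
    -- `C_{x₀}` is a `2`-cocycle:
    (∀ g₁ ∈ {g | F.IsSymplecto ω g}, ∀ g₂ ∈ {g | F.IsSymplecto ω g},
        ∀ g₃ ∈ {g | F.IsSymplecto ω g},
        C g₂ g₃ - C (g₁ * g₂) g₃ + C g₁ (g₂ * g₃) - C g₁ g₂ = 0) ∧
      -- it is normalized:
      (∀ g ∈ {g | F.IsSymplecto ω g}, C 1 g = 0 ∧ C g 1 = 0) ∧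
      -- independence of the base point, up to coboundary:
      (∀ x₀' : M, ∀ C' : Equiv.Perm M → Equiv.Perm M → ℝ,
        (∀ g₁ ∈ {g | F.IsSymplecto ω g}, ∀ g₂ ∈ {g | F.IsSymplecto ω g},
          ∃ f : M → ℝ, F.SmoothFun f ∧ F.d (ofFun f) = F.pull g₁ ω₁ - ω₁ ∧
            C' g₁ g₂ = f (g₂ x₀') - f x₀') →
        ∃ a : Equiv.Perm M → ℝ, ∀ g₁ ∈ {g | F.IsSymplecto ω g}, ∀ g₂ ∈ {g | F.IsSymplecto ω g},
          C g₁ g₂ - C' g₁ g₂ = a g₂ - a (g₁ * g₂) + a g₁) ∧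
      -- independence of the primitive `ω₁`, up to coboundary:
      (∀ ω₁' : Form M V 1, F.SmoothForm ω₁' → F.d ω₁' = ω →
        ∀ C' : Equiv.Perm M → Equiv.Perm M → ℝ,
        (∀ g₁ ∈ {g | F.IsSymplecto ω g}, ∀ g₂ ∈ {g | F.IsSymplecto ω g},
          ∃ f : M → ℝ, F.SmoothFun f ∧ F.d (ofFun f) = F.pull g₁ ω₁' - ω₁' ∧
            C' g₁ g₂ = f (g₂ x₀) - f x₀) →
        ∃ b : Equiv.Perm M → ℝ, ∀ g₁ ∈ {g | F.IsSymplecto ω g}, ∀ g₂ ∈ {g | F.IsSymplecto ω g},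
          C g₁ g₂ - C' g₁ g₂ = b g₂ - b (g₁ * g₂) + b g₁) := by
  -- Path independence: the value computed from *any* primitive agrees.
  have key : ∀ (η : Form M V 1) (y : M) (D : Equiv.Perm M → Equiv.Perm M → ℝ),
      (∀ g₁ ∈ {g | F.IsSymplecto ω g}, ∀ g₂ ∈ {g | F.IsSymplecto ω g},
        ∃ f : M → ℝ, F.SmoothFun f ∧ F.d (ofFun f) = F.pull g₁ η - η ∧
          D g₁ g₂ = f (g₂ y) - f y) →
      ∀ g₁ ∈ {g | F.IsSymplecto ω g}, ∀ g₂ ∈ {g | F.IsSymplecto ω g},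
      ∀ f : M → ℝ, F.SmoothFun f → F.d (ofFun f) = F.pull g₁ η - η →
        D g₁ g₂ = f (g₂ y) - f y := by
    intro η y D hD g₁ hg₁ g₂ hg₂ f hf hd
    obtain ⟨f', hf', hd', hval⟩ := hD g₁ hg₁ g₂ hg₂
    have := constancy F hf hf' (hd.trans hd'.symm) (g₂ y) y
    rw [hval]; linarith
  refine ⟨?_, ?_, ?_, ?_⟩
  · -- cocycle identity
    intro g₁ hg₁ g₂ hg₂ g₃ hg₃
    obtain ⟨f₁, hf₁, hd₁, hv₁⟩ := hC g₁ hg₁ g₂ hg₂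
    obtain ⟨f₂, hf₂, hd₂, hv₂⟩ := hC g₂ hg₂ g₃ hg₃
    obtain ⟨hsm, hdm⟩ := prim_mul F ω₁ hg₁.1 hg₂.1 hf₁ hf₂ hd₁ hd₂
    have h12 : (g₁ * g₂) ∈ {g | F.IsSymplecto ω g} := symplecto_mul F ω hg₁ hg₂
    have e1 : C (g₁ * g₂) g₃ = (f₁ (g₂ (g₃ x₀)) + f₂ (g₃ x₀)) - (f₁ (g₂ x₀) + f₂ x₀) :=
      key ω₁ x₀ C hC (g₁ * g₂) h12 g₃ hg₃ _ hsm hdm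
    have e2 : C g₁ (g₂ * g₃) = f₁ (g₂ (g₃ x₀)) - f₁ x₀ := by
      have := key ω₁ x₀ C hC g₁ hg₁ (g₂ * g₃) (symplecto_mul F ω hg₂ hg₃) f₁ hf₁ hd₁
      simpa [Equiv.Perm.mul_apply] using this
    rw [hv₁, hv₂, e1, e2]; ring
  · -- normalization
    intro g hg
    constructor
    · have h0 : F.d (ofFun (V := V) fun _ : M => (0 : ℝ)) =
          F.pull (1 : Equiv.Perm M) ω₁ - ω₁ := by
        rw [ofFun_zero', d_zero', Equiv.Perm.coe_one, pull_id, sub_self]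
      have := key ω₁ x₀ C hC 1 (symplecto_one F ω) g hg _ (F.smoothFun_const 0) h0
      simpa using this
    · obtain ⟨f, hf, hd, hv⟩ := hC g hg 1 (symplecto_one F ω)
      simp only [Equiv.Perm.coe_one, id_eq] at hv
      simpa using hv
  · -- independence of the base point
    intro x₀' C' hC'
    have hC2 := hC
    choose fC hs hd _hv using hC2
    classical
    refine ⟨fun g => if hg : g ∈ {g | F.IsSymplecto ω g} then
      fC g hg g hg x₀' - fC g hg g hg x₀ else 0, ?_⟩
    intro g₁ hg₁ g₂ hg₂
    have h12 : (g₁ * g₂) ∈ {g | F.IsSymplecto ω g} := symplecto_mul F ω hg₁ hg₂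
    set f₁ := fC g₁ hg₁ g₁ hg₁ with hf₁def
    set f₂ := fC g₂ hg₂ g₂ hg₂ with hf₂def
    set f₁₂ := fC (g₁ * g₂) h12 (g₁ * g₂) h12 with hf₁₂def
    obtain ⟨hsm, hdm⟩ := prim_mul F ω₁ hg₁.1 hg₂.1 (hs g₁ hg₁ g₁ hg₁) (hs g₂ hg₂ g₂ hg₂)
      (hd g₁ hg₁ g₁ hg₁) (hd g₂ hg₂ g₂ hg₂)
    -- the two chosen primitives for g₁*g₂ differ by a constant
    have hconst := constancy F (hs (g₁ * g₂) h12 (g₁ * g₂) h12) hsm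
      ((hd (g₁ * g₂) h12 (g₁ * g₂) h12).trans hdm.symm) x₀' x₀
    have eC : C g₁ g₂ = f₁ (g₂ x₀) - f₁ x₀ :=
      key ω₁ x₀ C hC g₁ hg₁ g₂ hg₂ f₁ (hs g₁ hg₁ g₁ hg₁) (hd g₁ hg₁ g₁ hg₁)
    have eC' : C' g₁ g₂ = f₁ (g₂ x₀') - f₁ x₀' :=
      key ω₁ x₀' C' hC' g₁ hg₁ g₂ hg₂ f₁ (hs g₁ hg₁ g₁ hg₁) (hd g₁ hg₁ g₁ hg₁)
    rw [eC, eC']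
    simp only [dif_pos hg₁, dif_pos hg₂, dif_pos h12, ← hf₁def, ← hf₂def, ← hf₁₂def]
    have : f₁₂ x₀' - f₁₂ x₀ =
        (f₁ (g₂ x₀') + f₂ x₀') - (f₁ (g₂ x₀) + f₂ x₀) := by linarith
    rw [this]; ring
  · -- independence of the primitive
    intro ω₁' hω₁' hdω₁' C' hC'
    obtain ⟨h, hh, hdh⟩ := hH1 (ω₁ - ω₁')
      (F.smoothForm_add hω₁ (F.smoothForm_neg hω₁'))
      (by rw [d_sub', hdω₁, hdω₁', sub_self])
    refine ⟨fun g => h x₀ - h (g x₀), ?_⟩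
    intro g₁ hg₁ g₂ hg₂
    obtain ⟨f', hf', hd', hv'⟩ := hC' g₁ hg₁ g₂ hg₂
    -- f' + h∘g₁ - h is a primitive for `pull g₁ ω₁ - ω₁`
    have hsf : F.SmoothFun fun x => f' x + h (g₁ x) - h x :=
      smoothFun_sub' F (smoothFun_add' F hf' (F.smoothFun_comp hh hg₁.1)) hh
    have hdf : F.d (ofFun fun x => f' x + h (g₁ x) - h x) = F.pull g₁ ω₁ - ω₁ := by
      rw [ofFun_sub', ofFun_add', d_sub', F.d_add, hd',
        d_pull_ofFun F hg₁.1 hh, hdh, pull_sub]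
      abel
    have eC : C g₁ g₂ = (f' (g₂ x₀) + h (g₁ (g₂ x₀)) - h (g₂ x₀)) -
        (f' x₀ + h (g₁ x₀) - h x₀) :=
      key ω₁ x₀ C hC g₁ hg₁ g₂ hg₂ _ hsf hdf
    simp only [eC, hv', Equiv.Perm.mul_apply]; ring

end SymplCocycle
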